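/- For any x ∈ ℝ^n, the product x_1 x_2 ··· x_n equals Σ_{α ∈ B(n,n)} (-1)^{n - ‖α‖₀} · (n - ‖α‖₀)! / (n! · n^{n-‖α‖₀} · Π_{α_i ≠ 0} α_i) · ⟨α, x⟩^n, where B(n,n) is the set of all vectors α ∈ ℕ^n with α_1 + ... + α_n = n and ‖α‖₀ is the number of nonzero entries of α. -/

import Mathlib

set_option linter.unusedSectionVars false
set_option maxHeartbeats 1000000
open Finset MvPolynomial Nat

namespace Stmt6Aux


variable {V : Type*} [Fintype V] [DecidableEq V]

lemma prod_monomial_one {R : Type*} [CommSemiring R] (s : Finset V) (e : V → (V →₀ ℕ)) :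
    (∏ j ∈ s, (monomial (e j) (1:R))) = monomial (∑ j ∈ s, e j) 1 := by
  induction s using Finset.cons_induction with
  | empty => simp
  | cons a s ha ih => rw [Finset.prod_cons, ih, monomial_mul, Finset.sum_cons, one_mul]

lemma sum_single_eq (g : V → ℕ) :
    ∑ j : V, Finsupp.single j (g j) = Finsupp.equivFunOnFinite.symm g := by
  ext i
  rw [Finset.sum_apply']
  simp [Finsupp.single_apply]

/-- fiber profile of a function -/
def profile {A : Type*} [Fintype A] (f : A → V) : V → ℕ :=
  fun j => (Finset.univ.filter fun a => f a = j).card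

lemma prod_X_comp {R : Type*} [CommSemiring R] {A : Type*} [Fintype A] (f : A → V) :
    (∏ a : A, (X (f a) : MvPolynomial V R))
      = monomial (Finsupp.equivFunOnFinite.symm (profile f)) 1 := by
  rw [← Finset.prod_fiberwise_of_maps_to (fun a _ => Finset.mem_univ (f a))
    (fun a => (X (f a) : MvPolynomial V R))]
  have h1 : ∀ j : V, (∏ a ∈ Finset.univ.filter fun a => f a = j, (X (f a) : MvPolynomial V R))
      = monomial (Finsupp.single j (profile f j)) 1 := by
    intro j
    have : ∀ a ∈ Finset.univ.filter fun a => f a = j,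
        (X (f a) : MvPolynomial V R) = X j := by
      intro a ha
      rw [(Finset.mem_filter.mp ha).2]
    rw [Finset.prod_congr rfl this, Finset.prod_const, ← X_pow_eq_monomial]
    rfl
  rw [Finset.prod_congr rfl (fun j _ => h1 j), prod_monomial_one, sum_single_eq]

lemma coeff_prod_linear {A : Type*} [Fintype A] [DecidableEq A] (c : A → V → ℝ) (τ : V → ℕ) :
    coeff (Finsupp.equivFunOnFinite.symm τ) (∏ a : A, ∑ j : V, C (c a j) * X j)
      = ∑ f ∈ (Fintype.piFinset fun _ : A => (Finset.univ : Finset V)).filter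
            (fun f => profile f = τ), ∏ a, c a (f a) := by
  classical
  rw [Finset.prod_univ_sum, coeff_sum]
  have h1 : ∀ f : A → V, (∏ a : A, (C (c a (f a)) * X (f a) : MvPolynomial V ℝ))
      = C (∏ a, c a (f a)) * monomial (Finsupp.equivFunOnFinite.symm (profile f)) 1 := by
    intro f
    rw [Finset.prod_mul_distrib, ← map_prod, prod_X_comp]
  have h2 : ∀ f : A → V,
      coeff (Finsupp.equivFunOnFinite.symm τ)
        (∏ a : A, (C (c a (f a)) * X (f a) : MvPolynomial V ℝ))
      = if profile f = τ then ∏ a, c a (f a) else 0 := by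
    intro f
    rw [h1, coeff_C_mul, coeff_monomial]
    by_cases h : profile f = τ
    · simp [h]
    · rw [if_neg h, if_neg, mul_zero]
      intro hc
      exact h (Finsupp.equivFunOnFinite.symm.injective hc)
  rw [Finset.sum_congr rfl (fun f _ => h2 f), ← Finset.sum_filter]



variable {V : Type*} [Fintype V] [DecidableEq V]


variable {A : Type*} [Fintype A] [DecidableEq A]

lemma profile_mem {f : A → V} {T : Finset V}
    (hf : profile f = fun j => if j ∈ T then 1 else 0) (a : A) : f a ∈ T := by
  by_contra h
  have h0 : profile f (f a) = 0 := by rw [hf]; simp [h]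
  have ha : a ∈ Finset.univ.filter fun b => f b = f a := by simp
  have := Finset.card_pos.mpr ⟨a, ha⟩
  rw [show (Finset.univ.filter fun b => f b = f a).card = profile f (f a) from rfl, h0] at this
  exact absurd this (lt_irrefl 0)

lemma profile_inj {f : A → V} {T : Finset V}
    (hf : profile f = fun j => if j ∈ T then 1 else 0) : Function.Injective f := by
  intro a b hab
  have hT : f a ∈ T := profile_mem hf a
  have h1 : profile f (f a) = 1 := by rw [hf]; simp [hT]
  by_contra hne
  have hsub : {a, b} ⊆ Finset.univ.filter fun c => f c = f a := by
    intro c hc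
    rcases Finset.mem_insert.mp hc with rfl | hc
    · simp
    · rw [Finset.mem_singleton.mp hc]; simp [hab.symm]
  have h2 := Finset.card_le_card hsub
  rw [Finset.card_pair hne] at h2
  rw [show (Finset.univ.filter fun c => f c = f a).card = profile f (f a) from rfl, h1] at h2
  omega

lemma card_profile_filter (T : Finset V) (h : Fintype.card A = T.card) :
    ((Fintype.piFinset fun _ : A => (Finset.univ : Finset V)).filter
        (fun f => profile f = fun j => if j ∈ T then 1 else 0)).card = (T.card).factorial := by
  classical
  have key : ((Fintype.piFinset fun _ : A => (Finset.univ : Finset V)).filter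
        (fun f => profile f = fun j => if j ∈ T then 1 else 0)).card
      = (Finset.univ : Finset (A ≃ {x // x ∈ T})).card := by
    refine Finset.card_bij'
      (fun f hf => Equiv.ofBijective
        (fun a => (⟨f a, profile_mem (Finset.mem_filter.mp hf).2 a⟩ : {x // x ∈ T}))
        (by
          have hf' := (Finset.mem_filter.mp hf).2
          refine (Fintype.bijective_iff_injective_and_card _).mpr ⟨?_, by rw [h, Fintype.card_coe]⟩
          intro a b hab
          exact profile_inj hf' (by simpa [Subtype.ext_iff] using hab)))
      (fun e _ => fun a => ((e a : {x // x ∈ T}) : V)) ?_ ?_ ?_ ?_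
    · intro f hf; exact Finset.mem_univ _
    · intro e _
      rw [Finset.mem_filter]
      refine ⟨by simp [Fintype.mem_piFinset], ?_⟩
      funext j
      show (Finset.univ.filter fun a => ((e a : {x // x ∈ T}) : V) = j).card = _
      by_cases hj : j ∈ T
      · rw [if_pos hj]
        have hs : (Finset.univ.filter fun a => ((e a : {x // x ∈ T}) : V) = j)
            = {e.symm ⟨j, hj⟩} := by
          ext a
          simp only [Finset.mem_filter, Finset.mem_univ, true_and, Finset.mem_singleton]
          constructor
          · intro ha; apply e.injective; rw [e.apply_symm_apply]; exact Subtype.ext ha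
          · intro ha; rw [ha, e.apply_symm_apply]
        rw [hs, Finset.card_singleton]
      · rw [if_neg hj, Finset.card_eq_zero, Finset.filter_eq_empty_iff]
        intro a _
        exact fun hc => hj (hc ▸ (e a).2)
    · intro f hf; funext a; rfl
    · intro e _
      apply Equiv.ext; intro a
      apply Subtype.ext; rfl
  rw [key, Finset.card_univ,
    Fintype.card_equiv (Fintype.equivOfCardEq (by rw [h, Fintype.card_coe])), h]

lemma profile_bijective {f : A → A} (hf : profile f = fun _ => 1) : Function.Bijective f := by
  have : profile f = fun j => if j ∈ (Finset.univ : Finset A) then 1 else 0 := by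
    rw [hf]; funext j; simp
  exact (Fintype.bijective_iff_injective_and_card f).mpr ⟨profile_inj this, rfl⟩



noncomputable def NN (n : ℕ) (α : Fin n → ℕ) : MvPolynomial (Fin n) ℝ :=
  ∏ i, ∏ r ∈ Finset.range (α i), (C (n:ℝ) * X i - C (r:ℝ) * ∑ j, X j)

lemma homog_lin {n : ℕ} (a b : ℝ) (i : Fin n) :
    (C a * X i - C b * ∑ j, X j : MvPolynomial (Fin n) ℝ).IsHomogeneous 1 := by
  apply MvPolynomial.IsHomogeneous.sub
  · simpa using (isHomogeneous_C (Fin n) a).mul (isHomogeneous_X ℝ i)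
  · have h : (∑ j, (X j : MvPolynomial (Fin n) ℝ)).IsHomogeneous 1 :=
      MvPolynomial.IsHomogeneous.sum _ _ _ (fun j _ => isHomogeneous_X ℝ j)
    simpa using (isHomogeneous_C (Fin n) b).mul h

lemma homog_NN {n : ℕ} (α : Fin n → ℕ) (hα : α ∈ Finset.Nat.antidiagonalTuple n n) :
    (NN n α).IsHomogeneous n := by
  have h1 : ∀ i : Fin n, (∏ r ∈ Finset.range (α i),
      (C (n:ℝ) * X i - C (r:ℝ) * ∑ j, X j)).IsHomogeneous (α i) := by
    intro i
    have := MvPolynomial.IsHomogeneous.prod (Finset.range (α i))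
      (fun r => (C (n:ℝ) * X i - C (r:ℝ) * ∑ j, X j)) (fun _ => 1)
      (fun r _ => homog_lin _ _ _)
    simpa using this
  have := MvPolynomial.IsHomogeneous.prod Finset.univ _ (fun i => α i) (fun i _ => h1 i)
  rwa [Finset.Nat.mem_antidiagonalTuple.mp hα] at this

lemma eval_homog_expand {n : ℕ} (p : MvPolynomial (Fin n) ℝ) (hp : p.IsHomogeneous n)
    (pt : Fin n → ℝ) :
    eval pt p = ∑ β ∈ Finset.Nat.antidiagonalTuple n n,
      coeff (Finsupp.equivFunOnFinite.symm β) p * ∏ i, pt i ^ β i := by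
  rw [eval_eq']
  have hsub : p.support ⊆ (Finset.Nat.antidiagonalTuple n n).image
      (fun β => Finsupp.equivFunOnFinite.symm β) := by
    intro d hd
    rw [Finset.mem_image]
    refine ⟨d, ?_, by ext i; simp⟩
    rw [Finset.Nat.mem_antidiagonalTuple]
    have h := hp (mem_support_iff.mp hd)
    have h2 : (Finsupp.weight 1) d = ∑ i, d i := by
      rw [Finsupp.weight_apply, Finsupp.sum_fintype]
      · simp
      · simp
    rw [← h2]
    exact h
  rw [Finset.sum_subset hsub (fun d _ hd => by
    rw [notMem_support_iff.mp hd, zero_mul])]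
  rw [Finset.sum_image (fun a _ b _ h => Finsupp.equivFunOnFinite.symm.injective h)]
  apply Finset.sum_congr rfl
  intro β _
  congr 1

lemma prod_range_sub_cast (m : ℕ) : ∏ r ∈ Finset.range m, ((m:ℝ) - r) = m.factorial := by
  have h1 : ∀ r ∈ Finset.range m, ((m:ℝ) - r) = ((m - r : ℕ) : ℝ) := fun r hr => by
    rw [Nat.cast_sub (le_of_lt (Finset.mem_range.mp hr))]
  rw [Finset.prod_congr rfl h1, ← Nat.cast_prod]
  congr 1
  rw [← Finset.prod_range_reflect]
  rw [Finset.prod_congr rfl (fun j hj => show m - (m - 1 - j) = j + 1 by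
    have := Finset.mem_range.mp hj; omega)]
  exact Finset.prod_range_add_one_eq_factorial m

lemma eval_NN {n : ℕ} {α γ : Fin n → ℕ} (hα : α ∈ Finset.Nat.antidiagonalTuple n n)
    (hγ : γ ∈ Finset.Nat.antidiagonalTuple n n) :
    eval (fun i => (γ i : ℝ)) (NN n α)
      = if α = γ then (n:ℝ)^n * ∏ i, ((α i).factorial : ℝ) else 0 := by
  have hγs : (∑ i, (γ i : ℝ)) = n := by
    rw [← Nat.cast_sum, Finset.Nat.mem_antidiagonalTuple.mp hγ]
  have hstep : eval (fun i => (γ i : ℝ)) (NN n α)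
      = ∏ i, ∏ r ∈ Finset.range (α i), ((n:ℝ) * ((γ i : ℝ) - r)) := by
    rw [NN, map_prod]
    apply Finset.prod_congr rfl
    intro i _
    rw [map_prod]
    apply Finset.prod_congr rfl
    intro r _
    rw [map_sub, map_mul, map_mul, eval_C, eval_C, eval_X]
    simp only [map_sum, eval_X]
    rw [hγs]
    ring
  by_cases h : α = γ
  · subst h
    rw [if_pos rfl, hstep]
    have : ∀ i : Fin n, ∏ r ∈ Finset.range (α i), ((n:ℝ) * ((α i : ℝ) - r))
        = (n:ℝ)^(α i) * ((α i).factorial : ℝ) := by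
      intro i
      rw [Finset.prod_mul_distrib, Finset.prod_const, Finset.card_range, prod_range_sub_cast]
    rw [Finset.prod_congr rfl (fun i _ => this i), Finset.prod_mul_distrib,
      Finset.prod_pow_eq_pow_sum, Finset.Nat.mem_antidiagonalTuple.mp hα]
  · rw [if_neg h, hstep]
    have hex : ∃ i, γ i < α i := by
      by_contra hc
      push_neg at hc
      apply h
      funext i
      have hs : ∑ i, α i = ∑ i, γ i := by
        rw [Finset.Nat.mem_antidiagonalTuple.mp hα, Finset.Nat.mem_antidiagonalTuple.mp hγ]
      exact ((Finset.sum_eq_sum_iff_of_le (fun i _ => hc i)).mp hs) i (Finset.mem_univ i)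
    obtain ⟨i, hi⟩ := hex
    apply Finset.prod_eq_zero (Finset.mem_univ i)
    apply Finset.prod_eq_zero (Finset.mem_range.mpr hi)
    simp



variable {V : Type*} [Fintype V] [DecidableEq V]

lemma coeff_prod_X_mul (s : Finset V) (t : V →₀ ℕ) (p : MvPolynomial V ℝ) :
    coeff ((∑ i ∈ s, Finsupp.single i 1) + t) ((∏ i ∈ s, X i) * p) = coeff t p := by
  induction s using Finset.cons_induction with
  | empty => simp
  | cons a s ha ih =>
    rw [Finset.prod_cons, Finset.sum_cons, mul_assoc, add_assoc, MvPolynomial.coeff_X_mul]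
    exact ih


lemma NN_split (n : ℕ) (α : Fin n → ℕ) :
    NN n α = (∏ i ∈ Finset.univ.filter (fun i => α i ≠ 0), X i) *
      (C ((n:ℝ)^(Finset.univ.filter (fun i => α i ≠ 0)).card) *
       ∏ i, ∏ r ∈ Finset.range (α i - 1), (C (n:ℝ) * X i - C ((r:ℝ)+1) * ∑ j, X j)) := by
  have hper : ∀ i : Fin n, (∏ r ∈ Finset.range (α i), (C (n:ℝ) * X i - C (r:ℝ) * ∑ j, X j))
      = (if α i ≠ 0 then (C (n:ℝ) * X i) else 1) *
        ∏ r ∈ Finset.range (α i - 1), (C (n:ℝ) * X i - C ((r:ℝ)+1) * ∑ j, X j) := by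
    intro i
    cases hai : α i with
    | zero => simp
    | succ m =>
      rw [Finset.prod_range_succ', if_pos (by omega), mul_comm]
      simp only [Nat.succ_sub_one]
      congr 1
      · simp
      · apply Finset.prod_congr rfl
        intro r _
        push_cast
        ring
  rw [NN, Finset.prod_congr rfl (fun i _ => hper i), Finset.prod_mul_distrib]
  have hite : (∏ i, if α i ≠ 0 then (C (n:ℝ) * X i) else 1)
      = C ((n:ℝ)^(Finset.univ.filter (fun i => α i ≠ 0)).card) *
        ∏ i ∈ Finset.univ.filter (fun i => α i ≠ 0), X i := by
    rw [← Finset.prod_filter, Finset.prod_mul_distrib, Finset.prod_const, ← map_pow]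
  rw [hite]
  ring

lemma sum_single_filter (p : V → Prop) [DecidablePred p] :
    (∑ i ∈ Finset.univ.filter p, Finsupp.single i (1:ℕ))
      = Finsupp.equivFunOnFinite.symm (fun j => if j ∈ Finset.univ.filter p then 1 else 0) := by
  ext jj
  rw [Finset.sum_apply']
  simp only [Finsupp.single_apply, Finsupp.coe_equivFunOnFinite_symm]
  rw [Finset.sum_ite_eq' (Finset.univ.filter p) jj (fun _ => 1)]

lemma neg_fact (m : ℕ) : (∏ r ∈ Finset.range m, (0 - ((r:ℝ)+1))) = (-1)^m * m.factorial := by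
  have h : ∀ r ∈ Finset.range m, (0 - ((r:ℝ)+1)) = (-1) * ((r:ℝ)+1) := by intros; ring
  rw [Finset.prod_congr rfl h, Finset.prod_mul_distrib, Finset.prod_const, Finset.card_range]
  congr 1
  rw [← Finset.prod_range_add_one_eq_factorial m]
  push_cast
  rfl


lemma sum_pred_sub (n : ℕ) (α : Fin n → ℕ) (hα : α ∈ Finset.Nat.antidiagonalTuple n n) :
    ∑ i, (α i - 1) = n - (Finset.univ.filter fun i => α i ≠ 0).card := by
  classical
  have hsum : ∑ i, α i = n := Finset.Nat.mem_antidiagonalTuple.mp hα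
  have hsupp_sum : ∑ i ∈ Finset.univ.filter (fun i => α i ≠ 0), α i = n := by
    rw [Finset.sum_filter_ne_zero]; exact hsum
  have h2 : ∑ i ∈ Finset.univ.filter (fun i => α i ≠ 0), ((α i - 1) + 1)
      = ∑ i ∈ Finset.univ.filter (fun i => α i ≠ 0), α i := by
    apply Finset.sum_congr rfl; intro i hi
    have : α i ≠ 0 := (Finset.mem_filter.mp hi).2
    omega
  rw [Finset.sum_add_distrib, Finset.sum_const, smul_eq_mul, mul_one] at h2
  have h0 : ∑ i ∈ Finset.univ.filter (fun i => ¬ α i ≠ 0), (α i - 1) = 0 := by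
    apply Finset.sum_eq_zero; intro i hi
    have : ¬ α i ≠ 0 := (Finset.mem_filter.mp hi).2
    omega
  have h3 := Finset.sum_filter_add_sum_filter_not Finset.univ (fun i => α i ≠ 0)
    (fun i => α i - 1)
  omega

lemma coeff_NN {n : ℕ} (α : Fin n → ℕ) (hα : α ∈ Finset.Nat.antidiagonalTuple n n) :
    coeff (Finsupp.equivFunOnFinite.symm (fun _ => 1)) (NN n α)
      = (n:ℝ)^((Finset.univ.filter fun i => α i ≠ 0).card) *
        (((n - (Finset.univ.filter fun i => α i ≠ 0).card).factorial : ℝ) *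
         ((-1:ℝ)^(n - (Finset.univ.filter fun i => α i ≠ 0).card) *
          ∏ i, (((α i - 1).factorial : ℝ)))) := by
  classical
  have hsum : ∑ i, α i = n := Finset.Nat.mem_antidiagonalTuple.mp hα
  have hZcard : (Finset.univ.filter fun i => ¬ α i ≠ 0).card
      = n - (Finset.univ.filter fun i => α i ≠ 0).card := by
    have := Finset.card_filter_add_card_filter_not
      (s := (Finset.univ : Finset (Fin n))) (p := fun i => α i ≠ 0)
    rw [Finset.card_univ, Fintype.card_fin] at this
    omega
  have hpred := sum_pred_sub n α hα
  have hA'card : Fintype.card ((i : Fin n) × Fin (α i - 1))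
      = (Finset.univ.filter fun i => ¬ α i ≠ 0).card := by
    rw [Fintype.card_sigma, hZcard]
    simp only [Fintype.card_fin]
    exact hpred
  -- exponent decomposition
  have hexp : (Finsupp.equivFunOnFinite.symm (fun _ => (1:ℕ)))
      = (∑ i ∈ Finset.univ.filter (fun i => α i ≠ 0), Finsupp.single i 1)
        + (∑ i ∈ Finset.univ.filter (fun i => ¬ α i ≠ 0), Finsupp.single i 1) := by
    rw [Finset.sum_filter_add_sum_filter_not Finset.univ (fun i => α i ≠ 0)
      (fun i => Finsupp.single i (1:ℕ))]
    exact (sum_single_eq (fun _ => 1)).symm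
  rw [hexp, NN_split, coeff_prod_X_mul, coeff_C_mul]
  congr 1
  -- convert P to product of linear forms over the sigma type
  have hform : ∀ (i : Fin n) (r : ℕ),
      (C (n:ℝ) * X i - C ((r:ℝ)+1) * ∑ j, X j : MvPolynomial (Fin n) ℝ)
        = ∑ j, C ((if j = i then (n:ℝ) else 0) - ((r:ℝ)+1)) * X j := by
    intro i r
    have h1 : ∀ j : Fin n, (C ((if j = i then (n:ℝ) else 0) - ((r:ℝ)+1)) * X j
        : MvPolynomial (Fin n) ℝ)
        = (if j = i then C (n:ℝ) * X j else 0) - C ((r:ℝ)+1) * X j := by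
      intro j
      by_cases h : j = i <;> simp [h, map_sub, sub_mul] <;> ring
    rw [Finset.sum_congr rfl (fun j _ => h1 j), Finset.sum_sub_distrib,
      Finset.sum_ite_eq' Finset.univ i (fun j => C (n:ℝ) * X j), if_pos (Finset.mem_univ i),
      ← Finset.mul_sum]
  have hP : (∏ i, ∏ r ∈ Finset.range (α i - 1), (C (n:ℝ) * X i - C ((r:ℝ)+1) * ∑ j, X j))
      = ∏ a : ((i : Fin n) × Fin (α i - 1)),
          ∑ j, C (((if j = a.1 then (n:ℝ) else 0) - (((a.2 : ℕ) : ℝ)+1))) * X j := by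
    rw [← Finset.univ_sigma_univ, Finset.prod_sigma]
    apply Finset.prod_congr rfl
    intro i _
    rw [← Fin.prod_univ_eq_prod_range
      (fun r => (C (n:ℝ) * X i - C ((r:ℝ)+1) * ∑ j, X j : MvPolynomial (Fin n) ℝ)) (α i - 1)]
    apply Finset.prod_congr rfl
    intro r _
    exact hform i (r : ℕ)
  have hτ : (∑ i ∈ Finset.univ.filter (fun i => ¬ α i ≠ 0), Finsupp.single i (1:ℕ))
      = Finsupp.equivFunOnFinite.symm
          (fun j => if j ∈ Finset.univ.filter (fun i => ¬ α i ≠ 0) then 1 else 0) :=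
    sum_single_filter _
  rw [hP, hτ, coeff_prod_linear]
  -- every term in the sum is the same constant
  have hterm : ∀ f ∈ (Fintype.piFinset fun _ : ((i : Fin n) × Fin (α i - 1)) =>
        (Finset.univ : Finset (Fin n))).filter
        (fun f => profile f = fun j => if j ∈ Finset.univ.filter (fun i => ¬ α i ≠ 0)
          then 1 else 0),
      (∏ a : ((i : Fin n) × Fin (α i - 1)),
        ((if (f a) = a.1 then (n:ℝ) else 0) - (((a.2 : ℕ) : ℝ)+1)))
        = ∏ a : ((i : Fin n) × Fin (α i - 1)), (0 - (((a.2 : ℕ) : ℝ)+1)) := by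
    intro f hf
    apply Finset.prod_congr rfl
    intro a _
    have hfZ := profile_mem (Finset.mem_filter.mp hf).2 a
    rw [Finset.mem_filter] at hfZ
    have hia : α a.1 ≠ 0 := by
      have h2 : (a.2 : ℕ) < α a.1 - 1 := a.2.2
      omega
    have hne : f a ≠ a.1 := by
      intro hc
      rw [hc] at hfZ
      exact hfZ.2 hia
    rw [if_neg hne]
  rw [Finset.sum_congr rfl hterm, Finset.sum_const]
  rw [card_profile_filter _ hA'card, hZcard]
  -- evaluate the constant product
  have hconst : (∏ a : ((i : Fin n) × Fin (α i - 1)), (0 - (((a.2 : ℕ) : ℝ)+1)))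
      = (-1:ℝ)^(n - (Finset.univ.filter fun i => α i ≠ 0).card)
        * ∏ i, (((α i - 1).factorial : ℝ)) := by
    rw [← Finset.univ_sigma_univ, Finset.prod_sigma]
    have hper : ∀ i : Fin n, (∏ r : Fin (α i - 1), (0 - (((r : ℕ) : ℝ)+1)))
        = (-1:ℝ)^(α i - 1) * ((α i - 1).factorial : ℝ) := by
      intro i
      rw [Fin.prod_univ_eq_prod_range (fun r => (0 - (((r : ℕ) : ℝ)+1))) (α i - 1)]
      exact neg_fact (α i - 1)
    rw [Finset.prod_congr rfl (fun i _ => hper i), Finset.prod_mul_distrib,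
      Finset.prod_pow_eq_pow_sum, hpred]
  rw [hconst, nsmul_eq_mul]

lemma coeff_Q {n : ℕ} (x : Fin n → ℝ) :
    coeff (Finsupp.equivFunOnFinite.symm (fun _ => 1))
        ((∑ i, C (x i) * X i : MvPolynomial (Fin n) ℝ)^n)
      = (n.factorial : ℝ) * ∏ i, x i := by
  classical
  have hpow : ((∑ i, C (x i) * X i : MvPolynomial (Fin n) ℝ))^n
      = ∏ _j : Fin n, (∑ i, C (x i) * X i) := by
    rw [Finset.prod_const, Finset.card_univ, Fintype.card_fin]
  rw [hpow, coeff_prod_linear (fun (_ : Fin n) (j : Fin n) => x j) (fun _ => 1)]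
  have hterm : ∀ f ∈ (Fintype.piFinset fun _ : Fin n => (Finset.univ : Finset (Fin n))).filter
      (fun f => profile f = fun _ => 1),
      (∏ a, x (f a)) = ∏ i, x i := by
    intro f hf
    exact (profile_bijective (Finset.mem_filter.mp hf).2).prod_comp x
  rw [Finset.sum_congr rfl hterm, Finset.sum_const, nsmul_eq_mul]
  congr 2
  have hcond : (Fintype.piFinset fun _ : Fin n => (Finset.univ : Finset (Fin n))).filter
        (fun f => profile f = fun _ => 1)
      = (Fintype.piFinset fun _ : Fin n => (Finset.univ : Finset (Fin n))).filter
        (fun f => profile f = fun j => if j ∈ (Finset.univ : Finset (Fin n)) then 1 else 0) := by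
    apply Finset.filter_congr
    intro f _
    simp
  rw [hcond, card_profile_filter (Finset.univ : Finset (Fin n)) (by rw [Finset.card_univ]),
    Finset.card_univ, Fintype.card_fin]


end Stmt6Aux

open Stmt6Aux Finset MvPolynomial Nat in
theorem stmt6 (n : ℕ) (hn : 0 < n) (x : Fin n → ℝ) :
    ∏ i, x i
    = ∑ α ∈ Finset.Nat.antidiagonalTuple n n,
        (-1 : ℝ) ^ (n - (Finset.univ.filter fun i => α i ≠ 0).card) *
            ((n - (Finset.univ.filter fun i => α i ≠ 0).card).factorial : ℝ) /
            ((n.factorial : ℝ) *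
              (n : ℝ) ^ (n - (Finset.univ.filter fun i => α i ≠ 0).card) *
              ∏ i ∈ Finset.univ.filter fun i => α i ≠ 0, (α i : ℝ)) *
          (∑ i, (α i : ℝ) * x i) ^ n := by
  classical
  have hn0 : (n:ℝ) ≠ 0 := Nat.cast_ne_zero.mpr hn.ne'
  have hfac0 : ((n.factorial : ℝ)) ≠ 0 := Nat.cast_ne_zero.mpr (Nat.factorial_pos n).ne'
  set B := Finset.Nat.antidiagonalTuple n n with hB
  set Q : MvPolynomial (Fin n) ℝ := (∑ i, C (x i) * X i)^n with hQ
  have hQhom : Q.IsHomogeneous n := by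
    have h1 : (∑ i, (C (x i) * X i : MvPolynomial (Fin n) ℝ)).IsHomogeneous 1 := by
      apply MvPolynomial.IsHomogeneous.sum
      intro i _
      simpa using (isHomogeneous_C (Fin n) (x i)).mul (isHomogeneous_X ℝ i)
    simpa using h1.pow n
  have h1B : (fun _ : Fin n => (1:ℕ)) ∈ B := by
    rw [hB, Finset.Nat.mem_antidiagonalTuple]
    simp
  set e1 : {β // β ∈ B} := ⟨fun _ => 1, h1B⟩ with he1
  set M1 : Matrix {β // β ∈ B} {β // β ∈ B} ℝ := fun a b =>
    coeff (Finsupp.equivFunOnFinite.symm (b : Fin n → ℕ)) (NN n (a : Fin n → ℕ))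
      / ((n:ℝ)^n * ∏ i, (((a : Fin n → ℕ) i).factorial : ℝ)) with hM1
  set M2 : Matrix {β // β ∈ B} {β // β ∈ B} ℝ := fun b c =>
    ∏ i, (((c : Fin n → ℕ) i : ℝ)) ^ ((b : Fin n → ℕ) i) with hM2
  have hD : ∀ a : {β // β ∈ B}, ((n:ℝ)^n * ∏ i, (((a : Fin n → ℕ) i).factorial : ℝ)) ≠ 0 := by
    intro a
    apply mul_ne_zero (pow_ne_zero _ hn0)
    rw [Finset.prod_ne_zero_iff]
    intro i _
    exact Nat.cast_ne_zero.mpr (Nat.factorial_pos _).ne'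
  have hM12 : M1 * M2 = 1 := by
    ext a c
    rw [Matrix.mul_apply, Matrix.one_apply]
    have hterm : ∀ b : {β // β ∈ B}, M1 a b * M2 b c
        = coeff (Finsupp.equivFunOnFinite.symm (b : Fin n → ℕ)) (NN n (a : Fin n → ℕ))
            * (∏ i, (((c : Fin n → ℕ) i : ℝ)) ^ ((b : Fin n → ℕ) i))
          / ((n:ℝ)^n * ∏ i, (((a : Fin n → ℕ) i).factorial : ℝ)) := by
      intro b; rw [hM1, hM2]; ring
    rw [Finset.sum_congr rfl (fun b _ => hterm b), ← Finset.sum_div]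
    have hsum : (∑ b : {β // β ∈ B},
        coeff (Finsupp.equivFunOnFinite.symm (b : Fin n → ℕ)) (NN n (a : Fin n → ℕ))
          * (∏ i, (((c : Fin n → ℕ) i : ℝ)) ^ ((b : Fin n → ℕ) i)))
        = eval (fun i => (((c : Fin n → ℕ)) i : ℝ)) (NN n (a : Fin n → ℕ)) := by
      rw [eval_homog_expand _ (homog_NN _ a.2) _, ← hB,
        ← Finset.sum_coe_sort B (fun β => coeff (Finsupp.equivFunOnFinite.symm β)
          (NN n (a : Fin n → ℕ)) * ∏ i, (((c : Fin n → ℕ) i : ℝ)) ^ (β i))]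
    rw [hsum, eval_NN a.2 c.2]
    by_cases h : (a : Fin n → ℕ) = (c : Fin n → ℕ)
    · rw [if_pos h, if_pos (Subtype.ext h), div_self (hD a)]
    · rw [if_neg h, if_neg (fun hc => h (congrArg _ hc)), zero_div]
  have hM21 := mul_eq_one_comm.mp hM12
  have heval : ∀ a : {β // β ∈ B}, (∑ i, (((a : Fin n → ℕ)) i : ℝ) * x i)^n
      = eval (fun i => (((a : Fin n → ℕ)) i : ℝ)) Q := by
    intro a
    rw [hQ, map_pow, map_sum]
    congr 1
    apply Finset.sum_congr rfl
    intro i _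
    rw [map_mul, eval_C, eval_X, mul_comm]
  have hweight : ∀ a : {β // β ∈ B},
      (-1 : ℝ) ^ (n - (Finset.univ.filter fun i => (a : Fin n → ℕ) i ≠ 0).card) *
            ((n - (Finset.univ.filter fun i => (a : Fin n → ℕ) i ≠ 0).card).factorial : ℝ) /
            ((n.factorial : ℝ) *
              (n : ℝ) ^ (n - (Finset.univ.filter fun i => (a : Fin n → ℕ) i ≠ 0).card) *
              ∏ i ∈ Finset.univ.filter fun i => (a : Fin n → ℕ) i ≠ 0, ((a : Fin n → ℕ) i : ℝ))
        = M1 a e1 / (n.factorial : ℝ) := by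
    intro a
    simp only [hM1]
    rw [coeff_NN _ a.2]
    set α : Fin n → ℕ := (a : Fin n → ℕ) with hα
    set k := (Finset.univ.filter fun i => α i ≠ 0).card with hk
    have hkn : k ≤ n := by
      have := Finset.card_filter_le (Finset.univ : Finset (Fin n)) (fun i => α i ≠ 0)
      rwa [Finset.card_univ, Fintype.card_fin] at this
    have hprod : (∏ i, ((α i).factorial : ℝ))
        = (∏ i ∈ Finset.univ.filter (fun i => α i ≠ 0), (α i : ℝ))
          * ∏ i, (((α i - 1).factorial : ℝ)) := by
      have hper : ∀ i : Fin n, ((α i).factorial : ℝ)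
          = (if α i ≠ 0 then (α i : ℝ) else 1) * (((α i - 1).factorial : ℝ)) := by
        intro i
        by_cases h : α i = 0
        · simp [h]
        · rw [if_pos h, ← Nat.cast_mul, Nat.mul_factorial_pred h]
      rw [Finset.prod_congr rfl (fun i _ => hper i), Finset.prod_mul_distrib,
        ← Finset.prod_filter]
    rw [hprod]
    have hpow : (n:ℝ)^n = (n:ℝ)^k * (n:ℝ)^(n-k) := by
      rw [← pow_add]
      congr 1
      omega
    rw [hpow]
    have h2 : (n:ℝ)^(n-k) ≠ 0 := pow_ne_zero _ hn0
    have h3 : (n:ℝ)^k ≠ 0 := pow_ne_zero _ hn0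
    have h4 : (∏ i ∈ Finset.univ.filter (fun i => α i ≠ 0), (α i : ℝ)) ≠ 0 := by
      rw [Finset.prod_ne_zero_iff]
      intro i hi
      exact Nat.cast_ne_zero.mpr (Finset.mem_filter.mp hi).2
    have h5 : (∏ i, (((α i - 1).factorial : ℝ))) ≠ 0 := by
      rw [Finset.prod_ne_zero_iff]
      intro i _
      exact Nat.cast_ne_zero.mpr (Nat.factorial_pos _).ne'
    have hnk0 : ((n - k).factorial : ℝ) ≠ 0 := Nat.cast_ne_zero.mpr (Nat.factorial_pos _).ne'
    field_simp
  -- main computation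
  symm
  rw [← Finset.sum_coe_sort B]
  have hstep : ∀ a : {β // β ∈ B},
      ((-1 : ℝ) ^ (n - (Finset.univ.filter fun i => (a : Fin n → ℕ) i ≠ 0).card) *
            ((n - (Finset.univ.filter fun i => (a : Fin n → ℕ) i ≠ 0).card).factorial : ℝ) /
            ((n.factorial : ℝ) *
              (n : ℝ) ^ (n - (Finset.univ.filter fun i => (a : Fin n → ℕ) i ≠ 0).card) *
              ∏ i ∈ Finset.univ.filter fun i => (a : Fin n → ℕ) i ≠ 0, ((a : Fin n → ℕ) i : ℝ)) *
          (∑ i, ((a : Fin n → ℕ) i : ℝ) * x i) ^ n)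
        = (M1 a e1 / (n.factorial : ℝ)) * eval (fun i => (((a : Fin n → ℕ)) i : ℝ)) Q := by
    intro a
    rw [← heval a, ← hweight a]
  rw [Finset.sum_congr rfl (fun a _ => hstep a)]
  have hexpand : ∀ a : {β // β ∈ B},
      (M1 a e1 / (n.factorial : ℝ)) * eval (fun i => (((a : Fin n → ℕ)) i : ℝ)) Q
        = ∑ b : {β // β ∈ B}, coeff (Finsupp.equivFunOnFinite.symm (b : Fin n → ℕ)) Q
            * (M2 b a * M1 a e1 / (n.factorial : ℝ)) := by
    intro a
    rw [eval_homog_expand _ hQhom _, ← hB,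
      ← Finset.sum_coe_sort B (fun β => coeff (Finsupp.equivFunOnFinite.symm β) Q
        * ∏ i, (((a : Fin n → ℕ) i : ℝ)) ^ (β i)), Finset.mul_sum]
    apply Finset.sum_congr rfl
    intro b _
    simp only [hM2]
    ring
  rw [Finset.sum_congr rfl (fun a _ => hexpand a), Finset.sum_comm]
  have hinner : ∀ b : {β // β ∈ B},
      (∑ a : {β // β ∈ B}, coeff (Finsupp.equivFunOnFinite.symm (b : Fin n → ℕ)) Q
          * (M2 b a * M1 a e1 / (n.factorial : ℝ)))
        = coeff (Finsupp.equivFunOnFinite.symm (b : Fin n → ℕ)) Q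
            * ((M2 * M1) b e1 / (n.factorial : ℝ)) := by
    intro b
    rw [Matrix.mul_apply, Finset.sum_div, Finset.mul_sum]
  rw [Finset.sum_congr rfl (fun b _ => hinner b), hM21]
  have hlast : ∀ b : {β // β ∈ B},
      coeff (Finsupp.equivFunOnFinite.symm (b : Fin n → ℕ)) Q
          * ((1 : Matrix {β // β ∈ B} {β // β ∈ B} ℝ) b e1 / (n.factorial : ℝ))
        = if b = e1 then coeff (Finsupp.equivFunOnFinite.symm (b : Fin n → ℕ)) Q
            / (n.factorial : ℝ) else 0 := by
    intro b
    rw [Matrix.one_apply]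
    split <;> simp [div_eq_mul_inv] <;> ring
  rw [Finset.sum_congr rfl (fun b _ => hlast b), Finset.sum_ite_eq' Finset.univ e1
    (fun b => coeff (Finsupp.equivFunOnFinite.symm (b : Fin n → ℕ)) Q / (n.factorial : ℝ)),
    if_pos (Finset.mem_univ e1)]
  have he1c : ((e1 : {β // β ∈ B}) : Fin n → ℕ) = fun _ => 1 := rfl
  rw [he1c, hQ, coeff_Q, mul_comm, mul_div_assoc, div_self hfac0, mul_one]
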